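/- For any two lines v and w, i.e., any v, w ∈ L with B(v,v) = B(v,K) = −1, B(v,C) = 0 and B(w,w) = B(w,K) = −1, B(w,C) = 0, there exists a ℤ-linear automorphism g of L satisfying B(g(x), g(y)) = B(x,y) for all x, y ∈ L, g(K) = K, g(C) = C, and g(v) = w. (That is, the group of isometries of the lattice fixing K and C, which contains the Weyl group W(Eₙ) generated by reflections in the roots, acts transitively on the set of lines.) -/

import Mathlib

noncomputable section
namespace ADEPaper

/-- The Picard lattice `L = ℤ^{n+2}` with basis `h = e 0`, `lᵢ = e i` for `1 ≤ i ≤ n+1`. -/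
abbrev L (n : ℕ) : Type := Fin (n + 2) → ℤ

/-- The intersection form: `B(h,h) = 1`, `B(lᵢ,lᵢ) = -1`, distinct basis vectors orthogonal. -/
def B (n : ℕ) (v w : L n) : ℤ :=
  v 0 * w 0 - ∑ i : Fin (n + 1), v i.succ * w i.succ

/-- The canonical class `K = -3h + l₁ + ⋯ + l_{n+1}`. -/
def K (n : ℕ) : L n := fun j => if j = 0 then -3 else 1

/-- `C = l_{n+1}`, the exceptional curve of the `Eₙ`-surface. -/
def C (n : ℕ) : L n := fun j => if j = Fin.last (n + 1) then 1 else 0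

section Aux

variable {n : ℕ}

def ε (n : ℕ) (t : Fin (n + 2)) : L n := Pi.single t 1

lemma B_add_left (x y z : L n) : B n (x + y) z = B n x z + B n y z := by
  simp only [B, Pi.add_apply, add_mul, Finset.sum_add_distrib]; ring

lemma B_add_right (x y z : L n) : B n x (y + z) = B n x y + B n x z := by
  simp only [B, Pi.add_apply, mul_add, Finset.sum_add_distrib]; ring

lemma B_smul_left (c : ℤ) (x z : L n) : B n (c • x) z = c * B n x z := by
  simp only [B, Pi.smul_apply, smul_eq_mul, mul_sub, Finset.mul_sum, mul_assoc]

lemma B_smul_right (c : ℤ) (x z : L n) : B n x (c • z) = c * B n x z := by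
  simp only [B, Pi.smul_apply, smul_eq_mul, mul_sub, Finset.mul_sum]
  congr 1
  · ring
  · exact Finset.sum_congr rfl fun i _ => by ring

lemma B_sub_right (x y z : L n) : B n x (y - z) = B n x y - B n x z := by
  simp only [B, Pi.sub_apply, mul_sub, Finset.sum_sub_distrib]; ring

lemma B_sub_left (x y z : L n) : B n (x - y) z = B n x z - B n y z := by
  simp only [B, Pi.sub_apply, sub_mul, Finset.sum_sub_distrib]; ring

lemma B_comm (x y : L n) : B n x y = B n y x := by
  simp only [B]
  rw [mul_comm]
  congr 1
  exact Finset.sum_congr rfl fun i _ => mul_comm _ _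

lemma B_single_zero (x : L n) : B n x (ε n 0) = x 0 := by
  simp [B, ε, Pi.single_apply, (Fin.succ_ne_zero _).symm]

lemma B_single_succ (x : L n) (j : Fin (n + 1)) : B n x (ε n j.succ) = -(x j.succ) := by
  simp only [B, ε, Pi.single_apply]
  rw [if_neg (fun h => Fin.succ_ne_zero j h.symm)]
  simp only [Fin.succ_inj, mul_ite, mul_one, mul_zero, Finset.sum_ite_eq',
    Finset.mem_univ, if_true]
  ring
def reflL (n : ℕ) (α : L n) : L n →ₗ[ℤ] L n where
  toFun x := x + B n x α • α
  map_add' x y := by rw [B_add_left, add_smul]; abel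
  map_smul' c x := by
    simp only [RingHom.id_apply, B_smul_left, mul_smul, smul_add]

lemma reflL_apply (α x : L n) : reflL n α x = x + B n x α • α := rfl

lemma reflL_invol (α : L n) (hα : B n α α = -2) : Function.Involutive (reflL n α) := by
  intro x
  simp only [reflL_apply, B_add_left, B_smul_left, hα]
  have : B n x α + B n x α * -2 = -(B n x α) := by ring
  rw [this, neg_smul]
  abel

def reflE (n : ℕ) (α : L n) (hα : B n α α = -2) : L n ≃ₗ[ℤ] L n :=
  LinearEquiv.ofInvolutive (reflL n α) (reflL_invol α hα)

lemma reflE_apply (α : L n) (hα : B n α α = -2) (x : L n) :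
    reflE n α hα x = x + B n x α • α := rfl

def IsG (n : ℕ) (g : L n ≃ₗ[ℤ] L n) : Prop :=
  (∀ x y, B n (g x) (g y) = B n x y) ∧ g (K n) = K n ∧ g (C n) = C n

lemma IsG.refl : IsG n (LinearEquiv.refl ℤ (L n)) := ⟨fun _ _ => rfl, rfl, rfl⟩

lemma IsG.trans {g h : L n ≃ₗ[ℤ] L n} (hg : IsG n g) (hh : IsG n h) :
    IsG n (g.trans h) := by
  refine ⟨fun x y => ?_, ?_, ?_⟩
  · rw [LinearEquiv.trans_apply, LinearEquiv.trans_apply, hh.1, hg.1]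
  · rw [LinearEquiv.trans_apply, hg.2.1, hh.2.1]
  · rw [LinearEquiv.trans_apply, hg.2.2, hh.2.2]

lemma IsG.symm {g : L n ≃ₗ[ℤ] L n} (hg : IsG n g) : IsG n g.symm := by
  refine ⟨fun x y => ?_, ?_, ?_⟩
  · rw [← hg.1 (g.symm x) (g.symm y), g.apply_symm_apply, g.apply_symm_apply]
  · conv_lhs => rw [← hg.2.1]
    exact g.symm_apply_apply _
  · conv_lhs => rw [← hg.2.2]
    exact g.symm_apply_apply _

lemma isG_reflE (α : L n) (hα : B n α α = -2) (hK : B n (K n) α = 0)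
    (hC : B n (C n) α = 0) : IsG n (reflE n α hα) := by
  refine ⟨fun x y => ?_, ?_, ?_⟩
  · simp only [reflE_apply, B_add_left, B_add_right, B_smul_left, B_smul_right, hα]
    rw [B_comm α y]
    ring
  · rw [reflE_apply, hK, zero_smul, add_zero]
  · rw [reflE_apply, hC, zero_smul, add_zero]

lemma isLine_map {g : L n ≃ₗ[ℤ] L n} (hg : IsG n g) {v : L n}
    (h1 : B n v v = -1) (h2 : B n v (K n) = -1) (h3 : B n v (C n) = 0) :
    B n (g v) (g v) = -1 ∧ B n (g v) (K n) = -1 ∧ B n (g v) (C n) = 0 := by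
  refine ⟨by rw [hg.1, h1], ?_, ?_⟩
  · rw [← hg.2.1, hg.1, h2]
  · rw [← hg.2.2, hg.1, h3]
lemma eps_apply (t s : Fin (n + 2)) : ε n t s = if s = t then 1 else 0 :=
  Pi.single_apply t 1 s

lemma K_succ (j : Fin (n + 1)) : K n j.succ = 1 := by
  simp [K, Fin.succ_ne_zero]

lemma C_zero : C n 0 = 0 := by
  have : (0 : Fin (n + 2)) ≠ Fin.last (n + 1) := by
    simp [Fin.ext_iff]
  simp [C, this]

lemma C_succ (j : Fin (n + 1)) : C n j.succ = if j = Fin.last n then 1 else 0 := by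
  have : j.succ = Fin.last (n + 1) ↔ j = Fin.last n := by
    rw [← Fin.succ_last, Fin.succ_inj]
  simp [C, this]

lemma succ_ne_of_ne {i j : Fin (n + 1)} (h : i ≠ j) : i.succ ≠ j.succ :=
  fun hh => h (Fin.succ_inj.1 hh)

section root1
variable (i j : Fin (n + 1))

lemma root1_BB (hij : i ≠ j) :
    B n (ε n i.succ - ε n j.succ) (ε n i.succ - ε n j.succ) = -2 := by
  rw [B_sub_right, B_sub_left, B_sub_left, B_single_succ, B_single_succ,
    B_single_succ, B_single_succ]
  simp only [Pi.sub_apply, eps_apply, if_true, eq_self_iff_true, if_neg (succ_ne_of_ne hij),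
    if_neg (succ_ne_of_ne (Ne.symm hij))]
  norm_num

lemma root1_BK : B n (K n) (ε n i.succ - ε n j.succ) = 0 := by
  rw [B_sub_right, B_single_succ, B_single_succ, K_succ, K_succ]; ring

lemma root1_BC (hi : i ≠ Fin.last n) (hj : j ≠ Fin.last n) :
    B n (C n) (ε n i.succ - ε n j.succ) = 0 := by
  rw [B_sub_right, B_single_succ, B_single_succ, C_succ, C_succ,
    if_neg hi, if_neg hj]
  ring

end root1

section root2
variable (i j k : Fin (n + 1))

lemma root2_eval (x : L n) :
    B n x (ε n 0 - ε n i.succ - ε n j.succ - ε n k.succ) =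
      x 0 + x i.succ + x j.succ + x k.succ := by
  rw [B_sub_right, B_sub_right, B_sub_right, B_single_zero, B_single_succ,
    B_single_succ, B_single_succ]
  ring

lemma root2_BB (hij : i ≠ j) (hik : i ≠ k) (hjk : j ≠ k) :
    B n (ε n 0 - ε n i.succ - ε n j.succ - ε n k.succ)
      (ε n 0 - ε n i.succ - ε n j.succ - ε n k.succ) = -2 := by
  rw [root2_eval]
  simp only [Pi.sub_apply, eps_apply, if_true, eq_self_iff_true,
    if_neg (Fin.succ_ne_zero i), if_neg (Fin.succ_ne_zero j), if_neg (Fin.succ_ne_zero k),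
    if_neg (fun h : (0 : Fin (n+2)) = i.succ => Fin.succ_ne_zero i h.symm),
    if_neg (fun h : (0 : Fin (n+2)) = j.succ => Fin.succ_ne_zero j h.symm),
    if_neg (fun h : (0 : Fin (n+2)) = k.succ => Fin.succ_ne_zero k h.symm),
    if_neg (succ_ne_of_ne hij), if_neg (succ_ne_of_ne (Ne.symm hij)),
    if_neg (succ_ne_of_ne hik), if_neg (succ_ne_of_ne (Ne.symm hik)),
    if_neg (succ_ne_of_ne hjk), if_neg (succ_ne_of_ne (Ne.symm hjk))]
  norm_num

lemma root2_BK : B n (K n) (ε n 0 - ε n i.succ - ε n j.succ - ε n k.succ) = 0 := by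
  rw [root2_eval, K_succ, K_succ, K_succ]
  simp [K]

lemma root2_BC (hi : i ≠ Fin.last n) (hj : j ≠ Fin.last n) (hk : k ≠ Fin.last n) :
    B n (C n) (ε n 0 - ε n i.succ - ε n j.succ - ε n k.succ) = 0 := by
  rw [root2_eval, C_zero, C_succ, C_succ, C_succ, if_neg hi, if_neg hj, if_neg hk]
  ring

end root2
lemma key (m : ℕ) (hm : 4 ≤ m) (hm' : m ≤ 8) (a : ℤ) (ha : 1 ≤ a) (f : Fin m → ℤ)
    (h1 : ∑ t, f t = 1 - 3 * a) (h2 : ∑ t, f t ^ 2 = a ^ 2 + 1) :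
    ∃ i j k : Fin m, i ≠ j ∧ i ≠ k ∧ j ≠ k ∧ f i + f j + f k ≤ -(a + 1) := by
  have hs0 : (Finset.univ : Finset (Fin m)).Nonempty := ⟨⟨0, by omega⟩, Finset.mem_univ _⟩
  obtain ⟨i, -, hi⟩ := Finset.exists_min_image Finset.univ f hs0
  have hcard1 : (Finset.univ.erase i).card = m - 1 := by
    rw [Finset.card_erase_of_mem (Finset.mem_univ i), Finset.card_univ, Fintype.card_fin]
  have hs1 : (Finset.univ.erase i).Nonempty := by
    rw [← Finset.card_pos, hcard1]; omega
  obtain ⟨j, hjmem, hj⟩ := Finset.exists_min_image _ f hs1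
  have hcard2 : ((Finset.univ.erase i).erase j).card = m - 2 := by
    rw [Finset.card_erase_of_mem hjmem, hcard1]
    omega
  have hs2 : ((Finset.univ.erase i).erase j).Nonempty := by
    rw [← Finset.card_pos, hcard2]; omega
  obtain ⟨k, hkmem, hk⟩ := Finset.exists_min_image _ f hs2
  have hji : j ≠ i := (Finset.mem_erase.1 hjmem).1
  have hkj : k ≠ j := (Finset.mem_erase.1 hkmem).1
  have hki : k ≠ i := (Finset.mem_erase.1 (Finset.mem_erase.1 hkmem).2).1
  refine ⟨i, j, k, hji.symm, hki.symm, hkj.symm, ?_⟩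
  by_contra hT
  push_neg at hT
  have hT' : -a ≤ f i + f j + f k := by omega
  -- basic order facts
  have hij : f i ≤ f j := hi j (Finset.mem_univ j)
  have hjk : f j ≤ f k := hj k (Finset.mem_erase.1 hkmem).2
  -- the rest set
  set s := ((Finset.univ.erase i).erase j).erase k with hs
  have hscard : s.card = m - 3 := by
    rw [hs, Finset.card_erase_of_mem hkmem, hcard2]
    omega
  have hrest : ∑ x ∈ s, f x = (1 - 3 * a) - f i - f j - f k := by
    have e1 : ∑ x ∈ s, f x + f k = ∑ x ∈ (Finset.univ.erase i).erase j, f x :=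
      Finset.sum_erase_add _ _ hkmem
    have e2 : ∑ x ∈ (Finset.univ.erase i).erase j, f x + f j
        = ∑ x ∈ Finset.univ.erase i, f x := Finset.sum_erase_add _ _ hjmem
    have e3 : ∑ x ∈ Finset.univ.erase i, f x + f i = ∑ x, f x :=
      Finset.sum_erase_add _ _ (Finset.mem_univ i)
    rw [h1] at e3
    linarith
  have hlow : (s.card : ℤ) * f k ≤ ∑ x ∈ s, f x := by
    have := Finset.card_nsmul_le_sum s f (f k)
      (fun x hx => hk x (Finset.mem_of_mem_erase hx))
    simpa [nsmul_eq_mul] using this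
  rw [hscard, hrest] at hlow
  have hmc : ((m - 3 : ℕ) : ℤ) = (m : ℤ) - 3 := by omega
  rw [hmc] at hlow
  have hm3 : (1 : ℤ) ≤ (m : ℤ) - 3 := by omega
  -- f k is negative
  have hkneg : f k ≤ -1 := by
    by_contra h
    push_neg at h
    have h0 : 0 ≤ f k := by omega
    have : 0 ≤ ((m : ℤ) - 3) * f k := mul_nonneg (by linarith) h0
    linarith
  have hT3 : f i + f j + f k ≤ -3 := by linarith
  have ha3 : 3 ≤ a := by linarith
  -- averaging: m * T ≤ 3 * (1 - 3a)
  have ht3 : f i + f j + f k ≤ 3 * f k := by linarith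
  have h5 : ((m : ℤ) - 3) * (f i + f j + f k) ≤ ((m : ℤ) - 3) * (3 * f k) :=
    mul_le_mul_of_nonneg_left ht3 (by linarith)
  have h6 : ((m : ℤ) - 3) * (3 * f k) = 3 * (((m : ℤ) - 3) * f k) := by ring
  have havg : (m : ℤ) * (f i + f j + f k) ≤ 3 * (1 - 3 * a) := by
    rw [h6] at h5
    nlinarith [h5, hlow]
  have hm8 : (m : ℤ) ≤ 8 := by exact_mod_cast hm'
  have p1 : (m : ℤ) * (-a) ≤ (m : ℤ) * (f i + f j + f k) :=
    mul_le_mul_of_nonneg_left hT' (by positivity)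
  have p2 : 0 ≤ (8 - (m : ℤ)) * a := mul_nonneg (by linarith) (by linarith)
  have ha3' : a ≤ 3 := by nlinarith
  have haa : a = 3 := le_antisymm ha3' ha3
  subst haa
  -- now T = -3 and all three are -1
  have hfi : f i = -1 := by omega
  have hfj : f j = -1 := by omega
  have hfk : f k = -1 := by omega
  -- every value is ≥ -1, sum of (f x + 1) = m - 8 ≤ 0, each ≥ 0 ⇒ all = -1
  have hge : ∀ x, -1 ≤ f x := fun x => hfi ▸ hi x (Finset.mem_univ x)
  have hsum1 : ∑ x, (f x + 1) = (m : ℤ) - 8 := by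
    rw [Finset.sum_add_distrib, h1, Finset.sum_const, Finset.card_univ, Fintype.card_fin]
    push_cast
    ring
  have hnn : 0 ≤ ∑ x, (f x + 1) :=
    Finset.sum_nonneg fun x _ => by have := hge x; omega
  have hall : ∀ x ∈ Finset.univ, f x + 1 = 0 := by
    rw [← Finset.sum_eq_zero_iff_of_nonneg (fun x _ => by have := hge x; omega)]
    omega
  have h10 : ∑ x, f x ^ 2 = ∑ _x : Fin m, (1 : ℤ) := by
    refine Finset.sum_congr rfl fun x hx => ?_
    have hfx : f x = -1 := by have := hall x hx; omega
    rw [hfx]; norm_num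
  rw [h10] at h2
  simp at h2
  omega
lemma line_C {v : L n} (h3 : B n v (C n) = 0) : v ((Fin.last n).succ) = 0 := by
  have e : B n v (C n) = -(v ((Fin.last n).succ)) := by
    simp only [B, C_zero, mul_zero, C_succ, mul_ite, mul_one,
      Finset.sum_ite_eq', Finset.mem_univ, if_true, zero_sub]
  rw [h3] at e
  omega

lemma line_S1 {v : L n} (h2 : B n v (K n) = -1) :
    ∑ t : Fin (n + 1), v t.succ = 1 - 3 * v 0 := by
  have hK0 : K n 0 = -3 := by simp [K]
  have e : B n v (K n) = v 0 * (-3) - ∑ t : Fin (n + 1), v t.succ := by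
    simp only [B, hK0, K_succ, mul_one]
  rw [h2] at e
  linarith

lemma line_S2 {v : L n} (h1 : B n v v = -1) :
    ∑ t : Fin (n + 1), (v t.succ) ^ 2 = (v 0) ^ 2 + 1 := by
  have e : B n v v = v 0 ^ 2 - ∑ t : Fin (n + 1), (v t.succ) ^ 2 := by
    simp only [B, sq]
  rw [h1] at e
  linarith

lemma int_sq_sub_nonneg (b : ℤ) : 0 ≤ b ^ 2 - b := by
  rcases le_or_gt b 0 with h | h
  · nlinarith [sq_nonneg b]
  · nlinarith

lemma base_case (hn : 4 ≤ n) (hn' : n ≤ 8) (v : L n)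
    (h1 : B n v v = -1) (h2 : B n v (K n) = -1) (h3 : B n v (C n) = 0)
    (ha : v 0 ≤ 0) : ∃ g, IsG n g ∧ g v = ε n (Fin.succ 0) := by
  have hC0 := line_C h3
  have hS1 := line_S1 h2
  have hS2 := line_S2 h1
  set a := v 0 with hadef
  -- Cauchy–Schwarz to show a ≥ -1
  set M : ℤ := (n : ℤ) + 1 with hMdef
  have hM5 : (5 : ℤ) ≤ M := by simp only [hMdef]; exact_mod_cast by omega
  have hM9 : M ≤ 9 := by simp only [hMdef]; exact_mod_cast by omega
  set S : ℤ := 1 - 3 * a with hSdef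
  have cs : 0 ≤ ∑ t : Fin (n + 1), (M * v t.succ - S) ^ 2 :=
    Finset.sum_nonneg fun t _ => sq_nonneg _
  have e1 : ∀ t : Fin (n + 1), (M * v t.succ - S) ^ 2
      = M ^ 2 * (v t.succ) ^ 2 - 2 * M * S * v t.succ + S ^ 2 := fun t => by ring
  rw [Finset.sum_congr rfl (fun t _ => e1 t), Finset.sum_add_distrib,
    Finset.sum_sub_distrib, ← Finset.mul_sum, ← Finset.mul_sum, hS1, hS2,
    Finset.sum_const, Finset.card_univ, Fintype.card_fin, nsmul_eq_mul] at cs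
  have hcast : ((n + 1 : ℕ) : ℤ) = M := by simp [hMdef]
  rw [hcast] at cs
  -- cs : 0 ≤ M^2 * (a^2+1) - 2*M*S*S + M*S^2
  have h7 : 0 ≤ M * (a ^ 2 + 1) - S ^ 2 := by
    by_contra h
    push_neg at h
    nlinarith [cs]
  have h8 : 0 ≤ (9 - M) * (a ^ 2 + 1) := mul_nonneg (by linarith) (by positivity)
  have h9 : 0 ≤ 6 * a + 8 := by nlinarith [h7, h8]
  have hage : -1 ≤ a := by omega
  -- kill a = -1
  have hsum0 : 0 ≤ ∑ t : Fin (n + 1), ((v t.succ) ^ 2 - v t.succ) :=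
    Finset.sum_nonneg fun t _ => int_sq_sub_nonneg _
  rw [Finset.sum_sub_distrib, hS2, hS1] at hsum0
  have ha0 : a = 0 := by
    rcases (by omega : a = 0 ∨ a = -1) with h | h
    · exact h
    · exfalso; rw [hSdef, h] at hsum0; norm_num at hsum0
  -- structure: v is a basis vector
  have hS1' : ∑ t : Fin (n + 1), v t.succ = 1 := by rw [hS1, hSdef, ha0]; ring
  have hS2' : ∑ t : Fin (n + 1), (v t.succ) ^ 2 = 1 := by rw [hS2, ha0]; ring
  have hzsum : ∑ t : Fin (n + 1), ((v t.succ) ^ 2 - v t.succ) = 0 := by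
    rw [Finset.sum_sub_distrib, hS2', hS1']; ring
  have hzero : ∀ t : Fin (n + 1), (v t.succ) ^ 2 - v t.succ = 0 := fun t =>
    (Finset.sum_eq_zero_iff_of_nonneg
      (fun t _ => int_sq_sub_nonneg (v t.succ))).1 hzsum t (Finset.mem_univ t)
  have h01 : ∀ t : Fin (n + 1), v t.succ = 0 ∨ v t.succ = 1 := by
    intro t
    have : v t.succ * (v t.succ - 1) = 0 := by linear_combination hzero t
    rcases mul_eq_zero.1 this with h | h
    · exact Or.inl h
    · exact Or.inr (by linarith)
  obtain ⟨t0, -, ht0ne⟩ := Finset.exists_ne_zero_of_sum_ne_zero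
    (by rw [hS1']; norm_num : ∑ t : Fin (n + 1), v t.succ ≠ 0)
  have ht01 : v t0.succ = 1 := by rcases h01 t0 with h | h; exact absurd h ht0ne; exact h
  have hothers : ∀ s : Fin (n + 1), s ≠ t0 → v s.succ = 0 := by
    intro s hs
    have hsum : ∑ t ∈ Finset.univ.erase t0, v t.succ = 0 := by
      have h := Finset.sum_erase_add Finset.univ (fun t : Fin (n+1) => v t.succ)
        (Finset.mem_univ t0)
      rw [hS1', ht01] at h
      linarith
    have := (Finset.sum_eq_zero_iff_of_nonneg (fun t _ => by
      rcases h01 t with h | h <;> omega)).1 hsum s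
      (Finset.mem_erase.2 ⟨hs, Finset.mem_univ s⟩)
    exact this
  have ht0last : t0 ≠ Fin.last n := by
    intro h
    rw [h, hC0] at ht01
    norm_num at ht01
  have hveq : v = ε n t0.succ := by
    funext s
    refine Fin.cases ?_ ?_ s
    · rw [eps_apply, if_neg (fun h : (0 : Fin (n+2)) = t0.succ => Fin.succ_ne_zero t0 h.symm)]
      exact ha0
    · intro u
      rw [eps_apply]
      by_cases hu : u = t0
      · rw [if_pos (by rw [hu]), hu, ht01]
      · rw [if_neg (succ_ne_of_ne hu), hothers u hu]
  by_cases ht00 : t0 = 0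
  · exact ⟨LinearEquiv.refl ℤ (L n), IsG.refl, by
      rw [LinearEquiv.refl_apply, hveq, ht00]⟩
  · have h0last : (0 : Fin (n + 1)) ≠ Fin.last n := by
      intro h
      have hval := congrArg Fin.val h
      simp only [Fin.val_zero, Fin.val_last] at hval
      omega
    refine ⟨reflE n (ε n t0.succ - ε n (Fin.succ 0)) (root1_BB t0 0 ht00),
      isG_reflE _ _ (root1_BK t0 0) (root1_BC t0 0 ht0last h0last), ?_⟩
    rw [reflE_apply, hveq]
    have hBv : B n (ε n t0.succ) (ε n t0.succ - ε n (Fin.succ 0)) = -1 := by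
      rw [B_sub_right, B_single_succ, B_single_succ, eps_apply, eps_apply,
        if_pos rfl, if_neg (succ_ne_of_ne (fun h : (0 : Fin (n+1)) = t0 => ht00 h.symm))]
      ring
    rw [hBv, neg_smul, one_smul]
    abel
lemma to_e1 (hn : 4 ≤ n) (hn' : n ≤ 8) :
    ∀ (m : ℕ) (v : L n), B n v v = -1 → B n v (K n) = -1 → B n v (C n) = 0 →
      (v 0).toNat ≤ m → ∃ g, IsG n g ∧ g v = ε n (Fin.succ 0) := by
  intro m
  induction m with
  | zero =>
    intro v h1 h2 h3 h0
    exact base_case hn hn' v h1 h2 h3 (by omega)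
  | succ m ih =>
    intro v h1 h2 h3 hm
    by_cases hva : v 0 ≤ 0
    · exact base_case hn hn' v h1 h2 h3 hva
    push_neg at hva
    have hC0 := line_C h3
    have hS1 := line_S1 h2
    have hS2 := line_S2 h1
    have hsplit : ∑ t : Fin (n + 1), v t.succ
        = (∑ i : Fin n, v ((i.castSucc : Fin (n + 1)).succ)) + v ((Fin.last n).succ) :=
      Fin.sum_univ_castSucc (fun t : Fin (n + 1) => v t.succ)
    have hsplit2 : ∑ t : Fin (n + 1), (v t.succ) ^ 2
        = (∑ i : Fin n, (v ((i.castSucc : Fin (n + 1)).succ)) ^ 2)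
          + (v ((Fin.last n).succ)) ^ 2 :=
      Fin.sum_univ_castSucc (fun t : Fin (n + 1) => (v t.succ) ^ 2)
    rw [hsplit, hC0, add_zero] at hS1
    rw [hsplit2, hC0] at hS2
    norm_num at hS2
    obtain ⟨i, j, k, hij, hik, hjk, hT⟩ := key n hn hn' (v 0) (by omega)
      (fun i : Fin n => v ((i.castSucc : Fin (n + 1)).succ)) hS1 hS2
    have hIJ : (i.castSucc : Fin (n + 1)) ≠ j.castSucc := fun h => hij (Fin.castSucc_inj.1 h)
    have hIK : (i.castSucc : Fin (n + 1)) ≠ k.castSucc := fun h => hik (Fin.castSucc_inj.1 h)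
    have hJK : (j.castSucc : Fin (n + 1)) ≠ k.castSucc := fun h => hjk (Fin.castSucc_inj.1 h)
    have hIl : (i.castSucc : Fin (n + 1)) ≠ Fin.last n := (Fin.castSucc_lt_last i).ne
    have hJl : (j.castSucc : Fin (n + 1)) ≠ Fin.last n := (Fin.castSucc_lt_last j).ne
    have hKl : (k.castSucc : Fin (n + 1)) ≠ Fin.last n := (Fin.castSucc_lt_last k).ne
    set α : L n := ε n 0 - ε n (i.castSucc : Fin (n + 1)).succ
      - ε n (j.castSucc : Fin (n + 1)).succ - ε n (k.castSucc : Fin (n + 1)).succ with hα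
    have hαα : B n α α = -2 := root2_BB _ _ _ hIJ hIK hJK
    have hg1 : IsG n (reflE n α hαα) :=
      isG_reflE α hαα (root2_BK _ _ _) (root2_BC _ _ _ hIl hJl hKl)
    set v' := reflE n α hαα v with hv'
    obtain ⟨h1', h2', h3'⟩ := isLine_map hg1 h1 h2 h3
    have hα0 : α 0 = 1 := by
      simp only [hα, Pi.sub_apply, eps_apply, if_pos rfl,
        if_neg (fun h : (0 : Fin (n+2)) = _ => Fin.succ_ne_zero _ h.symm)]
      norm_num
    have hBvα : B n v α = v 0 + v (i.castSucc : Fin (n + 1)).succ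
        + v (j.castSucc : Fin (n + 1)).succ + v (k.castSucc : Fin (n + 1)).succ :=
      root2_eval _ _ _ v
    have hv'0 : v' 0 = 2 * v 0 + (v (i.castSucc : Fin (n + 1)).succ
        + v (j.castSucc : Fin (n + 1)).succ + v (k.castSucc : Fin (n + 1)).succ) := by
      rw [hv', reflE_apply, Pi.add_apply, Pi.smul_apply, hα0, hBvα, smul_eq_mul]
      ring
    have hle : (v' 0).toNat ≤ m := by
      have h10 : v' 0 ≤ v 0 - 1 := by omega
      omega
    obtain ⟨g2, hg2, hg2v⟩ := ih v' h1' h2' h3' hle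
    exact ⟨(reflE n α hαα).trans g2, hg1.trans hg2, by
      rw [LinearEquiv.trans_apply, ← hv', hg2v]⟩

theorem En_transitive (n : ℕ) (hn : 4 ≤ n) (hn' : n ≤ 8)
    (v w : L n)
    (hv : B n v v = -1 ∧ B n v (K n) = -1 ∧ B n v (C n) = 0)
    (hw : B n w w = -1 ∧ B n w (K n) = -1 ∧ B n w (C n) = 0) :
    ∃ g : L n ≃ₗ[ℤ] L n,
      (∀ x y : L n, B n (g x) (g y) = B n x y) ∧
      g (K n) = K n ∧ g (C n) = C n ∧ g v = w := by
  obtain ⟨gv, hgv, hgve⟩ := to_e1 hn hn' (v 0).toNat v hv.1 hv.2.1 hv.2.2 le_rfl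
  obtain ⟨gw, hgw, hgwe⟩ := to_e1 hn hn' (w 0).toNat w hw.1 hw.2.1 hw.2.2 le_rfl
  have hg : IsG n (gv.trans gw.symm) := hgv.trans hgw.symm
  refine ⟨gv.trans gw.symm, hg.1, hg.2.1, hg.2.2, ?_⟩
  rw [LinearEquiv.trans_apply, hgve, ← hgwe, LinearEquiv.symm_apply_apply]

end Aux

/-- For an `Eₙ`-surface (`4 ≤ n ≤ 8`), the group of isometries of the Picard lattice fixing
`K` and `C` acts transitively on the set of lines: for any two lines `v, w` there is a
ℤ-linear automorphism `g` of `L` preserving `B` with `g K = K`, `g C = C`, `g v = w`. -/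
theorem En_isometries_transitive_on_lines (n : ℕ) (hn : 4 ≤ n) (hn' : n ≤ 8)
    (v w : L n)
    (hv : B n v v = -1 ∧ B n v (K n) = -1 ∧ B n v (C n) = 0)
    (hw : B n w w = -1 ∧ B n w (K n) = -1 ∧ B n w (C n) = 0) :
    ∃ g : L n ≃ₗ[ℤ] L n,
      (∀ x y : L n, B n (g x) (g y) = B n x y) ∧
      g (K n) = K n ∧ g (C n) = C n ∧ g v = w :=
  En_transitive n hn hn' v w hv hw

end ADEPaper
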